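/- Assume ℓ_{ij} ≤ b+h for all i, j ∈ X, and fix an (α,β,γ)-well-separated hierarchical partition P_1,…,P_R of (X,ℓ). Let q ∈ ℝ^X with q_i ≥ μ_i for all i, and let d ∈ ℝ_+^X. Then: (i) C(q,d) ≥ h·(q_X − d_X) + (b+h)·(d_X − q_X)^+; and (ii) for every r ∈ {1,…,R−1} and every family F of clusters of P_r, C(q,d) ≥ h·(q_X − d_X) + (Δ_r/2)·Σ_{C∈F} (d_C − q̄_C)^+, where for a cluster C of P_r, C̄ = {i ∈ X : there exists j ∈ C with ℓ_{ij} < Δ_r/2} and q̄_C = q_C + Σ_{i∈C̄\C} (q_i − d_i)^+. -/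

import Mathlib

open MeasureTheory

section Base

variable {X : Type} [Fintype X]

/-- `ℓ` is a metric on the finite set `X`. -/
structure IsMetric (ℓ : X → X → ℝ) : Prop where
  refl : ∀ i, ℓ i i = 0
  pos : ∀ i j, i ≠ j → 0 < ℓ i j
  symm : ∀ i j, ℓ i j = ℓ j i
  triangle : ∀ i j k, ℓ i k ≤ ℓ i j + ℓ j k

/-- The cost `C(q, d)`: the optimal value of the fulfillment LP. -/
noncomputable def cost (ℓ : X → X → ℝ) (b h : ℝ) (q d : X → ℝ) : ℝ :=
  sInf { v | ∃ x : X → X → ℝ, (∀ i j, 0 ≤ x i j) ∧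
    (∀ i, ∑ j, x i j ≤ q i) ∧ (∀ j, ∑ i, x i j ≤ d j) ∧
    v = h * ∑ i, (q i - ∑ j, x i j) + b * ∑ j, (d j - ∑ i, x i j)
        + ∑ i, ∑ j, ℓ i j * x i j }

/-- Membership in the ambiguity set `F(μ, Σ)` where `Σ = diag (σ_i ^ 2)`:
probability distributions supported on the nonnegative orthant, with mean `μ`
and (diagonal) covariance matrix `diag (σ_i ^ 2)`. -/
def memF (μ σ : X → ℝ) (D : Measure (X → ℝ)) : Prop :=
  IsProbabilityMeasure D ∧
  (∀ᵐ d ∂D, ∀ i, 0 ≤ d i) ∧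
  (∀ i, Integrable (fun d => d i) D ∧ ∫ d, d i ∂D = μ i) ∧
  (∀ i j, Integrable (fun d => (d i - μ i) * (d j - μ j)) D) ∧
  (∀ i, ∫ d, (d i - μ i) ^ 2 ∂D = (σ i) ^ 2) ∧
  (∀ i j, i ≠ j → ∫ d, (d i - μ i) * (d j - μ j) ∂D = 0)

/-- The worst-case expected cost of the inventory vector `q`. -/
noncomputable def worstExp (ℓ : X → X → ℝ) (b h : ℝ) (μ σ : X → ℝ) (q : X → ℝ) : ℝ :=
  sSup { v | ∃ D : Measure (X → ℝ), memF μ σ D ∧ v = ∫ d, cost ℓ b h q d ∂D }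

/-- The optimal value `z_ODRNM` of the offline problem. -/
noncomputable def zODRNM (ℓ : X → X → ℝ) (b h : ℝ) (μ σ : X → ℝ) : ℝ :=
  sInf { v | ∃ q : X → ℝ, (∀ i, 0 ≤ q i) ∧ v = worstExp ℓ b h μ σ q }

/-- Distance between two clusters. -/
noncomputable def setDist (ℓ : X → X → ℝ) (C C' : Finset X) : ℝ :=
  sInf { v | ∃ i ∈ C, ∃ j ∈ C', v = ℓ i j }

/-- Diameter of a cluster. -/
noncomputable def fdiam (ℓ : X → X → ℝ) (C : Finset X) : ℝ :=
  sSup { v | ∃ i ∈ C, ∃ j ∈ C, v = ℓ i j }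

/-- `P` is an `(α, β)`-well-separated partition of `(X, ℓ)` of margin `Δ`:
at most `β` families of clusters, such that clusters within a family are at pairwise
distance more than `Δ`, every cluster has diameter less than `α·Δ`, and the set of all
clusters forms a partition of `X`. -/
def IsWSP (ℓ : X → X → ℝ) (α β Δ : ℝ) (P : Finset (Finset (Finset X))) : Prop :=
  ((P.card : ℝ) ≤ β) ∧
  (∀ F ∈ P, ∀ C ∈ F, ∀ C' ∈ F, C ≠ C' → Δ < setDist ℓ C C') ∧
  (∀ F ∈ P, ∀ C ∈ F, fdiam ℓ C < α * Δ) ∧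
  (∀ x : X, ∃! C : Finset X, (∃ F ∈ P, C ∈ F) ∧ x ∈ C)

/-- Minimum pairwise distance of the metric space. -/
noncomputable def minD (ℓ : X → X → ℝ) : ℝ := sInf { v | ∃ i j : X, i ≠ j ∧ v = ℓ i j }

/-- Maximum pairwise distance of the metric space. -/
noncomputable def maxD (ℓ : X → X → ℝ) : ℝ := sSup { v | ∃ i j : X, i ≠ j ∧ v = ℓ i j }

/-- The margin `Δ₁` of the first level. -/
noncomputable def delta1 (ℓ : X → X → ℝ) (α : ℝ) : ℝ :=
  (1 / α) * max (minD ℓ) (maxD ℓ / (Fintype.card X : ℝ))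

/-- The number of levels `R = ⌈log (max_{i≠j} ℓ i j / Δ₁) / log γ⌉ + 1`. -/
noncomputable def numLevels (ℓ : X → X → ℝ) (α γ : ℝ) : ℕ :=
  ⌈Real.log (maxD ℓ / delta1 ℓ α) / Real.log γ⌉₊ + 1

/-- `P 0, …, P (R - 1)` (with `R = numLevels ℓ α γ`) is an `(α, β, γ)`-well-separated
hierarchical partition of `(X, ℓ)`: level `r` is an `(α, β)`-well-separated partition of
margin `Δ_{r+1} = γ ^ r * Δ₁`, and each level coarsens the previous one. -/
def IsWSHP (ℓ : X → X → ℝ) (α β γ : ℝ) (P : ℕ → Finset (Finset (Finset X))) : Prop :=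
  (∀ r < numLevels ℓ α γ, IsWSP ℓ α β (γ ^ r * delta1 ℓ α) (P r)) ∧
  (∀ r, r + 1 < numLevels ℓ α γ →
    ∀ F ∈ P r, ∀ C ∈ F, ∃ F' ∈ P (r + 1), ∃ C' ∈ F', C ⊆ C')

/-- The set of all clusters of a well-separated partition. -/
def clustersOf [DecidableEq X] (P : Finset (Finset (Finset X))) : Finset (Finset X) :=
  P.biUnion id

/-- `diam_p C`: the diameter of the (unique) cluster of the next-level partition `P'`
containing the cluster `C`. -/
noncomputable def parentDiam (ℓ : X → X → ℝ) (P' : Finset (Finset (Finset X)))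
    (C : Finset X) : ℝ :=
  sSup { v | ∃ F ∈ P', ∃ C' ∈ F, C ⊆ C' ∧ v = fdiam ℓ C' }

/-- The hierarchical cost `C^H(q, d)`. -/
noncomputable def CH [DecidableEq X] (ℓ : X → X → ℝ) (b h : ℝ) (R : ℕ)
    (P : ℕ → Finset (Finset (Finset X))) (q d : X → ℝ) : ℝ :=
  h * max ((∑ i, q i) - ∑ i, d i) 0 + b * max ((∑ i, d i) - ∑ i, q i) 0 +
  (∑ r ∈ Finset.range (R - 1), ∑ C ∈ clustersOf (P r),
      parentDiam ℓ (P (r + 1)) C * max ((∑ i ∈ C, d i) - ∑ i ∈ C, q i) 0) +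
  fdiam ℓ Finset.univ / (Fintype.card X : ℝ) * ∑ i, max (d i - q i) 0

/-- `σ_C = √(Σ_{i ∈ C} σ_i²)`. -/
noncomputable def sigC (σ : X → ℝ) (C : Finset X) : ℝ := Real.sqrt (∑ i ∈ C, (σ i) ^ 2)

/-- Feasibility for the GSM covering LP. -/
def GSMFeasible [DecidableEq X] (ℓ : X → X → ℝ) (b h : ℝ) (μ σ : X → ℝ) (R : ℕ)
    (P : ℕ → Finset (Finset (Finset X))) (q : X → ℝ) : Prop :=
  (∀ r, r + 1 < R → ∀ C ∈ clustersOf (P r), 2 * h ≤ parentDiam ℓ (P (r + 1)) C →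
    sigC σ C / 2 * (Real.sqrt ((parentDiam ℓ (P (r + 1)) C - h) / h) -
        Real.sqrt (h / (parentDiam ℓ (P (r + 1)) C - h)))
      ≤ (∑ i ∈ C, q i) - ∑ i ∈ C, μ i) ∧
  (∀ i, σ i / (∑ j, σ j) * (sigC σ Finset.univ / 2) *
      (Real.sqrt (b / h) - Real.sqrt (h / b)) ≤ q i - μ i)

/-- Optimality for the GSM covering LP (minimizing the total safety stock `h (q_X - μ_X)`). -/
def GSMOptimal [DecidableEq X] (ℓ : X → X → ℝ) (b h : ℝ) (μ σ : X → ℝ) (R : ℕ)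
    (P : ℕ → Finset (Finset (Finset X))) (q : X → ℝ) : Prop :=
  GSMFeasible ℓ b h μ σ R P q ∧
  ∀ q' : X → ℝ, GSMFeasible ℓ b h μ σ R P q' →
    h * ((∑ i, q i) - ∑ i, μ i) ≤ h * ((∑ i, q' i) - ∑ i, μ i)

/-- The transportation cost `Θ(u, v)` between two vectors of equal total mass. -/
noncomputable def transCost (ℓ : X → X → ℝ) (u v : X → ℝ) : ℝ :=
  sInf { c | ∃ x : X → X → ℝ, (∀ i j, 0 ≤ x i j) ∧
    (∀ i, ∑ j, x i j = u i) ∧ (∀ j, ∑ i, x i j = v j) ∧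
    c = ∑ i, ∑ j, ℓ i j * x i j }

end Base


private lemma key_lb {X : Type} [Fintype X] (ℓ : X → X → ℝ) (b h : ℝ)
    (q d : X → ℝ) (hq0 : ∀ i, 0 ≤ q i) (hd : ∀ i, 0 ≤ d i)
    (y : X → ℝ) (hy0 : ∀ i, 0 ≤ y i) (hyub : ∀ i, y i ≤ b + h)
    (hlip : ∀ i j, y j ≤ y i + ℓ i j) :
    h * ((∑ i, q i) - ∑ i, d i) + ∑ i, y i * (d i - q i) ≤ cost ℓ b h q d := by
  apply le_csInf
  · refine ⟨_, fun _ _ => 0, fun i j => le_refl 0, ?_, ?_, rfl⟩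
    · intro i; simpa using hq0 i
    · intro j; simpa using hd j
  rintro v ⟨x, hx0, hxq, hxd, rfl⟩
  have hswap : ∑ i, ∑ j, x i j = ∑ j, ∑ i, x i j := Finset.sum_comm
  have hL : ∑ i, ∑ j, (y j - y i) * x i j ≤ ∑ i, ∑ j, ℓ i j * x i j := by
    refine Finset.sum_le_sum fun i _ => Finset.sum_le_sum fun j _ => ?_
    exact mul_le_mul_of_nonneg_right (by linarith [hlip i j]) (hx0 i j)
  have e : ∑ i, ∑ j, (y j - y i) * x i j
      = (∑ j, y j * ∑ i, x i j) - ∑ i, y i * ∑ j, x i j := by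
    simp only [sub_mul, Finset.sum_sub_distrib, Finset.mul_sum]
    congr 1
    exact Finset.sum_comm
  have n1 : 0 ≤ ∑ j, ((b + h - y j) * (d j - ∑ i, x i j)) := by
    refine Finset.sum_nonneg fun j _ => mul_nonneg (by linarith [hyub j]) (by linarith [hxd j])
  have n2 : 0 ≤ ∑ i, (y i * (q i - ∑ j, x i j)) := by
    refine Finset.sum_nonneg fun i _ => mul_nonneg (hy0 i) (by linarith [hxq i])
  have e1 : ∑ j, ((b + h - y j) * (d j - ∑ i, x i j))
      = (b + h) * (∑ j, d j) - (b + h) * (∑ j, ∑ i, x i j)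
        - (∑ j, y j * d j) + (∑ j, y j * ∑ i, x i j) := by
    simp only [sub_mul, mul_sub, Finset.sum_sub_distrib, Finset.sum_add_distrib,
      Finset.mul_sum]
    ring
  have e2 : ∑ i, (y i * (q i - ∑ j, x i j))
      = (∑ i, y i * q i) - ∑ i, y i * ∑ j, x i j := by
    simp only [mul_sub, Finset.sum_sub_distrib]
  have e3 : ∑ i, (q i - ∑ j, x i j) = (∑ i, q i) - ∑ i, ∑ j, x i j :=
    Finset.sum_sub_distrib _ _
  have e4 : ∑ j, (d j - ∑ i, x i j) = (∑ j, d j) - ∑ j, ∑ i, x i j :=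
    Finset.sum_sub_distrib _ _
  have e5 : ∑ i, y i * (d i - q i) = (∑ i, y i * d i) - ∑ i, y i * q i := by
    simp only [mul_sub, Finset.sum_sub_distrib]
  have hL' : (∑ j, y j * ∑ i, x i j) - (∑ i, y i * ∑ j, x i j)
      ≤ ∑ i, ∑ j, ℓ i j * x i j := by rw [← e]; exact hL
  rw [e3, e4, e5, hswap]
  rw [e1] at n1
  rw [e2] at n2
  ring_nf at n1 n2 hL' ⊢
  linarith [hswap]

/-- lower bounds on `C(q, d)`.  Part (i): the overage/underage lower bound.
Part (ii): for each level `r` (with `Δ_r = γ ^ r * Δ₁`) and each family `F` of the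
`r`-th partition, the cost is at least
`h (q_X - d_X) + (Δ_r / 2) Σ_{C ∈ F} (d_C - q̄_C)⁺`, where
`q̄_C = q_C + Σ_{i ∈ C̄ \ C} (q_i - d_i)⁺` and `C̄ = {i : ∃ j ∈ C, ℓ i j < Δ_r / 2}`. -/
theorem stmt9 {X : Type} [Fintype X] (hn : 2 ≤ Fintype.card X)
    (ℓ : X → X → ℝ) (hℓ : IsMetric ℓ) (b h : ℝ) (hh : 0 < h) (hbh : h ≤ b)
    (hub : ∀ i j, ℓ i j ≤ b + h)
    (α β γ : ℝ) (hα : 1 ≤ α) (hβ : 1 ≤ β) (hγ : 1 < γ)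
    (P : ℕ → Finset (Finset (Finset X))) (hP : IsWSHP ℓ α β γ P)
    (μ : X → ℝ) (hμ : ∀ i, 0 < μ i)
    (q d : X → ℝ) (hq : ∀ i, μ i ≤ q i) (hd : ∀ i, 0 ≤ d i) :
    (h * ((∑ i, q i) - ∑ i, d i) + (b + h) * max ((∑ i, d i) - ∑ i, q i) 0
      ≤ cost ℓ b h q d) ∧
    (∀ r, r + 1 < numLevels ℓ α γ → ∀ F ∈ P r,
      h * ((∑ i, q i) - ∑ i, d i) + γ ^ r * delta1 ℓ α / 2 *
        ∑ C ∈ F, max ((∑ i ∈ C, d i) -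
          ((∑ i ∈ C, q i) +
            ∑ i, Set.indicator {i : X | i ∉ C ∧ ∃ j ∈ C, ℓ i j < γ ^ r * delta1 ℓ α / 2}
              (fun i => max (q i - d i) 0) i)) 0
      ≤ cost ℓ b h q d) := by
  classical
  have hℓnn : ∀ i j, 0 ≤ ℓ i j := by
    intro i j
    rcases eq_or_ne i j with rfl | hne
    · rw [hℓ.refl]
    · exact (hℓ.pos i j hne).le
  have hq0 : ∀ i, 0 ≤ q i := fun i => (hμ i).le.trans (hq i)
  constructor
  · -- Part (i)
    rcases le_total (∑ i, d i) (∑ i, q i) with hc | hc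
    · have hmax : max ((∑ i, d i) - ∑ i, q i) 0 = 0 := max_eq_right (by linarith)
      rw [hmax, mul_zero, add_zero]
      have := key_lb ℓ b h q d hq0 hd (fun _ => 0) (fun _ => le_refl 0)
        (fun _ => show (0:ℝ) ≤ b + h by linarith) (fun i j => by simpa using hℓnn i j)
      simpa using this
    · have hmax : max ((∑ i, d i) - ∑ i, q i) 0 = (∑ i, d i) - ∑ i, q i :=
        max_eq_left (by linarith)
      rw [hmax]
      have := key_lb ℓ b h q d hq0 hd (fun _ => b + h)
        (fun _ => show (0:ℝ) ≤ b + h by linarith)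
        (fun _ => le_refl _)
        (fun i j => show b + h ≤ b + h + ℓ i j by linarith [hℓnn i j])
      have e : ∑ i, (b + h) * (d i - q i) = (b + h) * ((∑ i, d i) - ∑ i, q i) := by
        rw [← Finset.mul_sum, Finset.sum_sub_distrib]
      linarith [this, e.symm.le]
  · -- Part (ii)
    intro r hr F hF
    set Δ : ℝ := γ ^ r * delta1 ℓ α with hΔdef
    -- basic facts about the metric extremes
    set S : Set ℝ := { v | ∃ i j : X, i ≠ j ∧ v = ℓ i j } with hS
    have Sfin : S.Finite := by
      apply Set.Finite.subset (Set.finite_range (fun p : X × X => ℓ p.1 p.2))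
      rintro v ⟨i, j, _, rfl⟩
      exact ⟨(i, j), rfl⟩
    have Sne : S.Nonempty := by
      obtain ⟨i, j, hij⟩ := Fintype.exists_pair_of_one_lt_card (α := X) (by omega)
      exact ⟨ℓ i j, i, j, hij, rfl⟩
    have hminpos : 0 < minD ℓ := by
      have hmem : minD ℓ ∈ S := Set.Nonempty.csInf_mem Sne Sfin
      obtain ⟨i, j, hij, hv⟩ := hmem
      rw [hv]; exact hℓ.pos i j hij
    have hminmax : minD ℓ ≤ maxD ℓ := by
      have hmem : minD ℓ ∈ S := Set.Nonempty.csInf_mem Sne Sfin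
      exact le_csSup Sfin.bddAbove hmem
    have hmaxbh : maxD ℓ ≤ b + h := by
      apply csSup_le Sne
      rintro v ⟨i, j, _, rfl⟩
      exact hub i j
    have hαpos : (0:ℝ) < α := by linarith
    have hδ1pos : 0 < delta1 ℓ α := by
      apply mul_pos (by positivity)
      exact lt_of_lt_of_le hminpos (le_max_left _ _)
    have hΔpos : 0 < Δ := mul_pos (by positivity) hδ1pos
    have hΔbh : Δ ≤ b + h := by
      have h1 : (r : ℝ) < Real.log (maxD ℓ / delta1 ℓ α) / Real.log γ := by
        have : r < ⌈Real.log (maxD ℓ / delta1 ℓ α) / Real.log γ⌉₊ := by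
          have h0 : r + 1 < ⌈Real.log (maxD ℓ / delta1 ℓ α) / Real.log γ⌉₊ + 1 := hr
          exact Nat.succ_lt_succ_iff.mp h0
        exact_mod_cast Nat.lt_ceil.mp this
      have hlogγ : 0 < Real.log γ := Real.log_pos hγ
      have h2 : (r : ℝ) * Real.log γ < Real.log (maxD ℓ / delta1 ℓ α) :=
        (lt_div_iff₀ hlogγ).mp h1
      have h3 : Real.log (γ ^ r) < Real.log (maxD ℓ / delta1 ℓ α) := by
        rw [Real.log_pow]; exact_mod_cast h2
      have hγrpos : (0:ℝ) < γ ^ r := by positivity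
      have hmdpos : 0 < maxD ℓ / delta1 ℓ α :=
        div_pos (lt_of_lt_of_le hminpos hminmax) hδ1pos
      have h4 : γ ^ r < maxD ℓ / delta1 ℓ α := by
        have := Real.exp_lt_exp.mpr h3
        rwa [Real.exp_log hγrpos, Real.exp_log hmdpos] at this
      have h5 : Δ < maxD ℓ := by
        rw [hΔdef]
        exact (lt_div_iff₀ hδ1pos).mp h4
      linarith
    -- well-separated partition facts at level r
    have hwsp := hP.1 r (by omega)
    have hsep := hwsp.2.1 F hF
    have huniq := hwsp.2.2.2
    -- clusters of F containing a common point are equal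
    have hcluniq : ∀ C ∈ F, ∀ C' ∈ F, ∀ i : X, i ∈ C → i ∈ C' → C = C' := by
      intro C hC C' hC' i hiC hiC'
      exact ((huniq i).unique ⟨⟨F, hF, hC⟩, hiC⟩ ⟨⟨F, hF, hC'⟩, hiC'⟩)
    have hsetdist : ∀ C C' : Finset X, ∀ i ∈ C, ∀ j ∈ C', setDist ℓ C C' ≤ ℓ i j := by
      intro C C' i hi j hj
      apply csInf_le
      · apply Set.Finite.bddBelow
        apply Set.Finite.subset (Set.finite_range (fun p : X × X => ℓ p.1 p.2))
        rintro v ⟨a, _, c, _, rfl⟩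
        exact ⟨(a, c), rfl⟩
      · exact ⟨i, hi, j, hj, rfl⟩
    -- halo and qbar
    set halo : Finset X → Finset X :=
      fun C => Finset.univ.filter (fun i => i ∉ C ∧ ∃ j ∈ C, ℓ i j < Δ / 2) with hhalo
    set qbar : Finset X → ℝ :=
      fun C => (∑ i ∈ C, q i) + ∑ i ∈ halo C, max (q i - d i) 0 with hqbar
    have hindic : ∀ C : Finset X,
        (∑ i, Set.indicator {i : X | i ∉ C ∧ ∃ j ∈ C, ℓ i j < Δ / 2}
          (fun i => max (q i - d i) 0) i) = ∑ i ∈ halo C, max (q i - d i) 0 := by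
      intro C
      rw [Finset.sum_indicator_eq_sum_filter]
      rfl
    set AC : Finset (Finset X) := F.filter (fun C => 0 < (∑ i ∈ C, d i) - qbar C) with hAC
    set A : Finset X := AC.biUnion id with hA
    -- the potential y
    set y : X → ℝ := fun i => (insert (0:ℝ) (A.image fun j => Δ / 2 - ℓ i j)).max'
      ⟨0, Finset.mem_insert_self 0 _⟩ with hy
    have hy0 : ∀ i, 0 ≤ y i := by
      intro i
      simp only [hy]
      exact Finset.le_max' _ 0 (Finset.mem_insert_self 0 _)
    have hyel : ∀ i, ∀ j ∈ A, Δ / 2 - ℓ i j ≤ y i := by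
      intro i j hj
      simp only [hy]
      refine Finset.le_max' _ _ (Finset.mem_insert_of_mem ?_)
      exact Finset.mem_image_of_mem (fun k => Δ / 2 - ℓ i k) hj
    have hy1 : ∀ i, y i ≤ Δ / 2 := by
      intro i
      simp only [hy]
      apply Finset.max'_le
      intro v hv
      rcases Finset.mem_insert.mp hv with rfl | hv
      · linarith
      · obtain ⟨j, _, rfl⟩ := Finset.mem_image.mp hv
        linarith [hℓnn i j]
    have hyub : ∀ i, y i ≤ b + h := fun i => le_trans (hy1 i) (by linarith)
    have hylip : ∀ i j, y j ≤ y i + ℓ i j := by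
      intro i j
      have hyi := hyel i
      simp only [hy]
      apply Finset.max'_le
      intro v hv
      rcases Finset.mem_insert.mp hv with rfl | hv
      · have := hy0 i; have := hℓnn i j; linarith
      · obtain ⟨k, hk, rfl⟩ := Finset.mem_image.mp hv
        have h1 := hyi k hk
        have h2 := hℓ.triangle i j k
        simp only [hy] at h1
        linarith
    have hyA : ∀ j ∈ A, y j = Δ / 2 := by
      intro j hj
      refine le_antisymm (hy1 j) ?_
      have := hyel j j hj
      rw [hℓ.refl] at this
      linarith
    have hy4 : ∀ i, i ∉ AC.biUnion (fun C => C ∪ halo C) → y i = 0 := by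
      intro i hi
      refine le_antisymm ?_ (hy0 i)
      simp only [hy]
      apply Finset.max'_le
      intro v hv
      rcases Finset.mem_insert.mp hv with rfl | hv
      · exact le_refl 0
      · obtain ⟨k, hk, rfl⟩ := Finset.mem_image.mp hv
        obtain ⟨C, hCAC, hkC⟩ := Finset.mem_biUnion.mp hk
        by_contra hcon
        push_neg at hcon
        have hlt : ℓ i k < Δ / 2 := by linarith
        apply hi
        apply Finset.mem_biUnion.mpr ⟨C, hCAC, ?_⟩
        by_cases hiC : i ∈ C
        · exact Finset.mem_union_left _ hiC
        · exact Finset.mem_union_right _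
            (Finset.mem_filter.mpr ⟨Finset.mem_univ i, hiC, k, hkC, hlt⟩)
    -- disjointness
    have hdisjCH : ∀ C : Finset X, Disjoint C (halo C) := by
      intro C
      rw [Finset.disjoint_left]
      intro i hiC hih
      exact ((Finset.mem_filter.mp hih).2.1 hiC)
    have hdisjG : (↑AC : Set (Finset X)).PairwiseDisjoint (fun C => C ∪ halo C) := by
      intro C hC C' hC' hne
      have hCF : C ∈ F := (Finset.mem_filter.mp hC).1
      have hC'F : C' ∈ F := (Finset.mem_filter.mp hC').1
      have hd : Δ < setDist ℓ C C' := hsep C hCF C' hC'F hne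
      rw [Function.onFun, Finset.disjoint_left]
      intro i hi hi'
      rcases Finset.mem_union.mp hi with h1 | h1 <;>
        rcases Finset.mem_union.mp hi' with h2 | h2
      · exact hne (hcluniq C hCF C' hC'F i h1 h2)
      · obtain ⟨_, _, j, hjC', hlt⟩ := Finset.mem_filter.mp h2
        have := hsetdist C C' i h1 j hjC'
        linarith
      · obtain ⟨_, _, j, hjC, hlt⟩ := Finset.mem_filter.mp h1
        have := hsetdist C C' j hjC i h2
        rw [hℓ.symm] at hlt
        linarith
      · obtain ⟨_, _, j, hjC, hlt⟩ := Finset.mem_filter.mp h1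
        obtain ⟨_, _, j', hjC', hlt'⟩ := Finset.mem_filter.mp h2
        have ht := hℓ.triangle j i j'
        have := hsetdist C C' j hjC j' hjC'
        rw [hℓ.symm j i] at ht
        linarith
    -- sum decomposition
    have hsum1 : ∑ i, y i * (d i - q i)
        = ∑ C ∈ AC, ∑ i ∈ C ∪ halo C, y i * (d i - q i) := by
      rw [← Finset.sum_biUnion hdisjG]
      apply (Finset.sum_subset (Finset.subset_univ _) ?_).symm
      intro i _ hi
      rw [hy4 i hi, zero_mul]
    have hperC : ∀ C ∈ AC, Δ / 2 * ((∑ i ∈ C, d i) - qbar C)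
        ≤ ∑ i ∈ C ∪ halo C, y i * (d i - q i) := by
      intro C hC
      rw [Finset.sum_union (hdisjCH C)]
      have e1 : ∑ i ∈ C, y i * (d i - q i)
          = Δ / 2 * ((∑ i ∈ C, d i) - ∑ i ∈ C, q i) := by
        rw [mul_sub, Finset.mul_sum, Finset.mul_sum, ← Finset.sum_sub_distrib]
        apply Finset.sum_congr rfl
        intro i hi
        rw [hyA i (Finset.mem_biUnion.mpr ⟨C, hC, hi⟩)]
        ring
      have e2 : ∑ i ∈ halo C, (Δ / 2 * (-(max (q i - d i) 0)))
          ≤ ∑ i ∈ halo C, y i * (d i - q i) := by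
        apply Finset.sum_le_sum
        intro i _
        rcases le_total (d i) (q i) with hc | hc
        · rw [max_eq_left (by linarith)]
          have h1 := hy1 i
          have h2 := hy0 i
          nlinarith
        · rw [max_eq_right (by linarith)]
          have h1 := hy0 i
          nlinarith
      have e3 : ∑ i ∈ halo C, (Δ / 2 * (-(max (q i - d i) 0)))
          = -(Δ / 2 * ∑ i ∈ halo C, max (q i - d i) 0) := by
        rw [← Finset.mul_sum, Finset.sum_neg_distrib, mul_neg]
      have e4 : qbar C = (∑ i ∈ C, q i) + ∑ i ∈ halo C, max (q i - d i) 0 := rfl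
      rw [e3] at e2
      rw [e1, e4]
      set M := ∑ i ∈ halo C, max (q i - d i) 0
      set DC := ∑ i ∈ C, d i
      set QC := ∑ i ∈ C, q i
      have : Δ / 2 * (DC - (QC + M)) = Δ / 2 * (DC - QC) + -(Δ / 2 * M) := by ring
      rw [this]
      exact add_le_add_right e2 _
    have hsplit : ∑ C ∈ F, (Δ / 2 * max ((∑ i ∈ C, d i) - qbar C) 0)
        = ∑ C ∈ AC, (Δ / 2 * ((∑ i ∈ C, d i) - qbar C)) := by
      rw [← Finset.sum_filter_add_sum_filter_not F
        (fun C => 0 < (∑ i ∈ C, d i) - qbar C)]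
      have hz : ∑ C ∈ F.filter (fun C => ¬ 0 < (∑ i ∈ C, d i) - qbar C),
          (Δ / 2 * max ((∑ i ∈ C, d i) - qbar C) 0) = 0 := by
        apply Finset.sum_eq_zero
        intro C hC
        have := (Finset.mem_filter.mp hC).2
        rw [max_eq_right (by linarith), mul_zero]
      rw [hz, add_zero]
      apply Finset.sum_congr rfl
      intro C hC
      have := (Finset.mem_filter.mp hC).2
      rw [max_eq_left (by linarith)]
    have hmain : Δ / 2 * ∑ C ∈ F, max ((∑ i ∈ C, d i) - qbar C) 0
        ≤ ∑ i, y i * (d i - q i) := by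
      rw [Finset.mul_sum, hsplit, hsum1]
      exact Finset.sum_le_sum hperC
    have hkey := key_lb ℓ b h q d hq0 hd y hy0 hyub hylip
    have hgoal : ∑ C ∈ F, max ((∑ i ∈ C, d i) -
          ((∑ i ∈ C, q i) +
            ∑ i, Set.indicator {i : X | i ∉ C ∧ ∃ j ∈ C, ℓ i j < Δ / 2}
              (fun i => max (q i - d i) 0) i)) 0
        = ∑ C ∈ F, max ((∑ i ∈ C, d i) - qbar C) 0 := by
      apply Finset.sum_congr rfl
      intro C _
      rw [hindic C]
    rw [hgoal]
    linarith
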